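/- Let c₁ ≠ 0, β = (c₁+1)/c₁, γ ∈ ℝ, and d₁, d₂ ∈ ℝ. Then the function u(S,t) = d₁·S^β·e^{−γβt} + d₂ satisfies u_S(S,t) − c₁·S·u_SS(S,t) = 0 for all S > 0 and t ∈ ℝ; that is, the denominator of the nonlinear term in the special-model PDE u_t + (1/2)·σ²S²·u_SS·u_S²/(u_S − c₁·S·u_SS)² = 0 vanishes identically on this two-parameter family of functions (which must therefore be excluded from the reduction procedure). -/

import Mathlib

open Real Set

/-- Partial derivative of `u(S,t)` with respect to `S`. -/
noncomputable def pS (u : ℝ → ℝ → ℝ) (S t : ℝ) : ℝ := deriv (fun s => u s t) S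

/-- Second partial derivative of `u(S,t)` with respect to `S`. -/
noncomputable def pSS (u : ℝ → ℝ → ℝ) (S t : ℝ) : ℝ := deriv (fun s => pS u s t) S

lemma deriv_pow_fam (b : ℝ) (d e : ℝ) {S : ℝ} (hS : 0 < S) :
    deriv (fun s : ℝ => d * s ^ b * e) S = d * b * S ^ (b - 1) * e := by
  have h : HasDerivAt (fun s : ℝ => d * s ^ b * e)
      (d * b * S ^ (b - 1) * e) S := by
    have h0 : HasDerivAt (fun s : ℝ => s ^ b) (b * S ^ (b - 1)) S := by
      simpa using Real.hasDerivAt_rpow_const (p := b) (Or.inl hS.ne')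
    have := (h0.const_mul d).mul_const e
    convert this using 1 <;> first | rfl | ring
  exact h.deriv

theorem denominator_vanishing_family
    (c₁ γ β : ℝ) (hc₁ : c₁ ≠ 0) (hβ : β = (c₁ + 1) / c₁)
    (d₁ d₂ : ℝ)
    (u : ℝ → ℝ → ℝ)
    (hu : u = fun S t => d₁ * S ^ β * Real.exp (-γ * β * t) + d₂) :
    ∀ S ∈ Set.Ioi (0 : ℝ), ∀ t : ℝ,
      pS u S t - c₁ * S * pSS u S t = 0 := by
  intro S hS t
  rw [Set.mem_Ioi] at hS
  set E := Real.exp (-γ * β * t) with hE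
  have hpS : ∀ s : ℝ, 0 < s → pS u s t = d₁ * β * s ^ (β - 1) * E := by
    intro s hs
    unfold pS
    rw [hu]
    simp only
    rw [deriv_add_const]
    exact deriv_pow_fam β d₁ E hs
  have hpSS : pSS u S t = d₁ * β * (β - 1) * S ^ (β - 2) * E := by
    unfold pSS
    have hev : (fun s => pS u s t) =ᶠ[nhds S]
        (fun s => (d₁ * β) * s ^ (β - 1) * E) := by
      filter_upwards [IsOpen.mem_nhds isOpen_Ioi (Set.mem_Ioi.mpr hS)] with s hs
      exact hpS s (Set.mem_Ioi.mp hs)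
    rw [Filter.EventuallyEq.deriv_eq hev, deriv_pow_fam (β - 1) (d₁ * β) E hS]
    ring_nf
  rw [hpS S hS, hpSS]
  have hpow : S * S ^ (β - 2) = S ^ (β - 1) := by
    have h := Real.rpow_add hS 1 (β - 2)
    rw [show (1:ℝ) + (β - 2) = β - 1 by ring, Real.rpow_one] at h
    exact h.symm
  have hc : c₁ * (β - 1) = 1 := by
    rw [hβ]; field_simp; ring
  calc d₁ * β * S ^ (β - 1) * E - c₁ * S * (d₁ * β * (β - 1) * S ^ (β - 2) * E)
      = d₁ * β * S ^ (β - 1) * E - c₁ * (β - 1) * (d₁ * β * (S * S ^ (β - 2)) * E) := by ring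
    _ = 0 := by rw [hpow, hc]; ring
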